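/- Let G : ℝ^p × ℝ^m → ℝ^n be path differentiable with conservative Jacobian J_G : ℝ^{p+m} ⇉ ℝ^{n×(p+m)}. For fixed x ∈ ℝ^p, define Π_y J_G(x,y) = {M₂ ∈ ℝ^{n×m} : ∃ M₁ ∈ ℝ^{n×p}, (M₁ M₂) ∈ J_G(x,y)} (block notation). Then for every x, the set-valued map y ⇉ Π_y J_G(x,y) is a conservative Jacobian for y ↦ G(x,y). -/

import Mathlib

open MeasureTheory Set

/-- `D` is a conservative Jacobian for `f : ℝ^d → ℝ^n`: nonempty-valued, locally
bounded, closed graph, and chain rule along absolutely continuous curves. -/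
def IsConservativeJacobian {n d : ℕ}
    (D : (Fin d → ℝ) → Set (Matrix (Fin n) (Fin d) ℝ))
    (f : (Fin d → ℝ) → (Fin n → ℝ)) : Prop :=
  (∀ x, (D x).Nonempty) ∧
  (∀ x : Fin d → ℝ, ∃ ε > (0 : ℝ), ∃ C : ℝ,
    ∀ y, dist y x < ε → ∀ V ∈ D y, ∀ i j, |V i j| ≤ C) ∧
  IsClosed {q : (Fin d → ℝ) × Matrix (Fin n) (Fin d) ℝ | q.2 ∈ D q.1} ∧
  (∀ γ γ' : ℝ → (Fin d → ℝ),
    IntegrableOn γ' (Icc (0 : ℝ) 1) →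
    (∀ t ∈ Icc (0 : ℝ) 1, γ t - γ 0 = ∫ s in (0 : ℝ)..t, γ' s) →
    ∀ᵐ t ∂(volume.restrict (Icc (0 : ℝ) 1)),
      ∀ V ∈ D (γ t), HasDerivAt (fun s => f (γ s)) (V.mulVec (γ' t)) t)

/-- Extension by zero `v ↦ Fin.append 0 v` as a continuous linear map. -/
noncomputable def appendZeroCLM (p m : ℕ) : (Fin m → ℝ) →L[ℝ] (Fin (p + m) → ℝ) :=
  { toFun := fun v => Fin.append 0 v
    map_add' := by
      intro v w; funext i
      refine Fin.addCases (fun i => ?_) (fun i => ?_) i <;>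
        simp [Fin.append_left, Fin.append_right]
    map_smul' := by
      intro c v; funext i
      refine Fin.addCases (fun i => ?_) (fun i => ?_) i <;>
        simp [Fin.append_left, Fin.append_right]
    cont := continuous_pi fun i => by
      refine Fin.addCases (fun i => ?_) (fun i => ?_) i
      · simp only [Fin.append_left]; exact continuous_const
      · simp only [Fin.append_right]; exact continuous_apply i }

lemma dist_append_le {p m : ℕ} (x : Fin p → ℝ) (y y' : Fin m → ℝ) :
    dist (Fin.append x y') (Fin.append x y) ≤ dist y' y := by
  rw [dist_pi_le_iff dist_nonneg]
  intro b
  refine Fin.addCases (fun i => ?_) (fun i => ?_) b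
  · simp only [Fin.append_left]
    simpa using dist_nonneg (x := y') (y := y)
  · simp only [Fin.append_right]
    exact dist_le_pi_dist y' y i

lemma tendsto_append {p m : ℕ} (x : Fin p → ℝ) {u : ℕ → Fin m → ℝ} {y : Fin m → ℝ}
    (h : Filter.Tendsto u Filter.atTop (nhds y)) :
    Filter.Tendsto (fun k => Fin.append x (u k)) Filter.atTop (nhds (Fin.append x y)) := by
  rw [tendsto_pi_nhds]
  intro b
  refine Fin.addCases (fun i => ?_) (fun i => ?_) b
  · simp only [Fin.append_left]; exact tendsto_const_nhds
  · simp only [Fin.append_right]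
    exact (tendsto_pi_nhds.1 h) i

set_option maxHeartbeats 1000000 in
/-- Projection of a conservative Jacobian: if `J_G` is a conservative Jacobian for
`G : ℝ^{p+m} → ℝ^n`, then for each fixed `x ∈ ℝ^p` the set-valued map
`y ⇉ Π_y J_G(x,y) = {M₂ : ∃ M₁, (M₁ M₂) ∈ J_G(x,y)}` (block notation) is a
conservative Jacobian for `y ↦ G(x,y)`. -/
theorem projection_isConservativeJacobian {n p m : ℕ}
    (G : (Fin (p + m) → ℝ) → (Fin n → ℝ))
    (JG : (Fin (p + m) → ℝ) → Set (Matrix (Fin n) (Fin (p + m)) ℝ))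
    (hJG : IsConservativeJacobian JG G) :
    ∀ x : Fin p → ℝ,
      IsConservativeJacobian
        (fun y => {M₂ : Matrix (Fin n) (Fin m) ℝ |
          ∃ M₁ : Matrix (Fin n) (Fin p) ℝ,
            (Matrix.of fun i => Fin.append (M₁ i) (M₂ i)) ∈ JG (Fin.append x y)})
        (fun y => G (Fin.append x y)) := by
  obtain ⟨hne, hlb, hcl, hcr⟩ := hJG
  intro x
  have hrec : ∀ V : Matrix (Fin n) (Fin (p + m)) ℝ,
      (Matrix.of fun i => Fin.append (fun j => V i (Fin.castAdd m j))
        (fun j => V i (Fin.natAdd p j))) = V := by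
    intro V; ext i j
    refine Fin.addCases (fun j => ?_) (fun j => ?_) j <;>
      simp [Fin.append_left, Fin.append_right]
  refine ⟨?_, ?_, ?_, ?_⟩
  · -- nonempty
    intro y
    obtain ⟨V, hV⟩ := hne (Fin.append x y)
    exact ⟨fun i j => V i (Fin.natAdd p j), fun i j => V i (Fin.castAdd m j),
      Set.mem_of_eq_of_mem (hrec V) hV⟩
  · -- local boundedness
    intro y
    obtain ⟨ε, hε, C, hC⟩ := hlb (Fin.append x y)
    refine ⟨ε, hε, C, ?_⟩
    rintro y' hy' M₂ ⟨M₁, hM⟩ i j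
    have hd : dist (Fin.append x y') (Fin.append x y) < ε :=
      lt_of_le_of_lt (dist_append_le x y y') hy'
    have := hC _ hd _ hM i (Fin.natAdd p j)
    simpa [Fin.append_right] using this
  · -- closed graph
    haveI : FirstCountableTopology (Matrix (Fin n) (Fin m) ℝ) :=
      inferInstanceAs (FirstCountableTopology (Fin n → Fin m → ℝ))
    apply IsSeqClosed.isClosed
    intro f L hf hL
    choose M₁s hM₁s using hf
    obtain ⟨ε, hε, C, hC⟩ := hlb (Fin.append x L.1)
    have hL1 : Filter.Tendsto (fun k => (f k).1) Filter.atTop (nhds L.1) :=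
      (continuous_fst.tendsto L).comp hL
    have hL2 : Filter.Tendsto (fun k => (f k).2) Filter.atTop (nhds L.2) :=
      (continuous_snd.tendsto L).comp hL
    have hA : Filter.Tendsto (fun k => Fin.append x (f k).1) Filter.atTop
        (nhds (Fin.append x L.1)) := tendsto_append x hL1
    have hev : ∀ᶠ k in Filter.atTop, dist (Fin.append x (f k).1) (Fin.append x L.1) < ε := by
      have := Metric.tendsto_nhds.1 hA ε hε
      exact this
    obtain ⟨N, hN⟩ := Filter.eventually_atTop.1 hev
    set V : ℕ → Matrix (Fin n) (Fin (p + m)) ℝ :=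
      fun k => Matrix.of fun i => Fin.append (M₁s k i) ((f k).2 i) with hVdef
    have hVmem : ∀ k, V k ∈ JG (Fin.append x (f k).1) := hM₁s
    have hVbd : ∀ k, N ≤ k → V k ∈ {W : Matrix (Fin n) (Fin (p + m)) ℝ |
        ∀ i j, W i j ∈ Icc (-C) C} := by
      intro k hk i j
      have := hC _ (hN k hk) _ (hVmem k) i j
      exact abs_le.1 this
    have hKcpt : IsCompact {W : Matrix (Fin n) (Fin (p + m)) ℝ |
        ∀ i j, W i j ∈ Icc (-C) C} := by
      have : {W : Matrix (Fin n) (Fin (p + m)) ℝ | ∀ i j, W i j ∈ Icc (-C) C} =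
          Set.univ.pi (fun _ : Fin n => Set.univ.pi fun _ : Fin (p + m) => Icc (-C) C) := by
        ext W
        exact ⟨fun h i _ j _ => h i j, fun h i j => h i (Set.mem_univ i) j (Set.mem_univ j)⟩
      rw [this]
      exact isCompact_univ_pi fun i => isCompact_univ_pi fun j => isCompact_Icc
    haveI : FirstCountableTopology (Matrix (Fin n) (Fin (p + m)) ℝ) :=
      inferInstanceAs (FirstCountableTopology (Fin n → Fin (p + m) → ℝ))
    obtain ⟨W, _, φ, hφ, hWt⟩ := hKcpt.tendsto_subseq
      (x := fun k => V (k + N)) (fun k => hVbd _ (Nat.le_add_left _ _))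
    have hφt : Filter.Tendsto (fun k => φ k + N) Filter.atTop Filter.atTop :=
      Filter.tendsto_atTop_mono (fun k => Nat.le_add_right _ _) hφ.tendsto_atTop
    have hWt' : Filter.Tendsto (fun k => V (φ k + N)) Filter.atTop (nhds W) := hWt
    have hWmem : W ∈ JG (Fin.append x L.1) := by
      have hpair : Filter.Tendsto
          (fun k => (Fin.append x (f (φ k + N)).1, V (φ k + N))) Filter.atTop
          (nhds (Fin.append x L.1, W)) :=
        (hA.comp hφt).prodMk_nhds hWt'
      exact hcl.mem_of_tendsto hpair (Filter.Eventually.of_forall fun k => hVmem _)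
    have hentry : ∀ i j, L.2 i j = W i (Fin.natAdd p j) := by
      intro i j
      have h1 : Filter.Tendsto (fun k => V (φ k + N) i (Fin.natAdd p j))
          Filter.atTop (nhds (W i (Fin.natAdd p j))) :=
        (tendsto_pi_nhds.1 ((tendsto_pi_nhds.1 hWt') i)) _
      have h2 : Filter.Tendsto (fun k => (f (φ k + N)).2 i j) Filter.atTop
          (nhds (L.2 i j)) :=
        (tendsto_pi_nhds.1 ((tendsto_pi_nhds.1 (hL2.comp hφt)) i)) j
      have h3 : (fun k => V (φ k + N) i (Fin.natAdd p j)) =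
          fun k => (f (φ k + N)).2 i j := by
        funext k; simp [hVdef, Fin.append_right]
      rw [h3] at h1
      exact tendsto_nhds_unique h2 h1
    refine ⟨fun i j => W i (Fin.castAdd m j), ?_⟩
    have heqW : (Matrix.of fun i =>
        Fin.append ((fun i j => W i (Fin.castAdd m j)) i) (L.2 i)) = W := by
      ext i j
      refine Fin.addCases (fun j => ?_) (fun j => ?_) j <;>
        simp [Fin.append_left, Fin.append_right, hentry]
    exact Set.mem_of_eq_of_mem heqW hWmem
  · -- chain rule
    intro γ γ' hint hftc
    set L := appendZeroCLM p m with hLdef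
    have hint' : IntegrableOn (fun t => L (γ' t)) (Icc (0 : ℝ) 1) :=
      L.integrable_comp hint
    have hftc' : ∀ t ∈ Icc (0 : ℝ) 1,
        (fun s => Fin.append x (γ s)) t - (fun s => Fin.append x (γ s)) 0 =
          ∫ s in (0 : ℝ)..t, L (γ' s) := by
      intro t ht
      have h1 : IntervalIntegrable γ' volume 0 t := by
        apply IntegrableOn.intervalIntegrable
        rw [uIcc_of_le ht.1]
        exact hint.mono_set (Icc_subset_Icc le_rfl ht.2)
      rw [L.intervalIntegral_comp_comm h1, ← hftc t ht]
      funext i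
      refine Fin.addCases (fun i => ?_) (fun i => ?_) i <;>
        simp [hLdef, appendZeroCLM, Fin.append_left, Fin.append_right]
    have := hcr (fun t => Fin.append x (γ t)) (fun t => L (γ' t)) hint' hftc'
    filter_upwards [this] with t ht M₂ hM₂
    obtain ⟨M₁, hM⟩ := hM₂
    have hd := ht _ hM
    have heq : (Matrix.of fun i => Fin.append (M₁ i) (M₂ i)).mulVec (L (γ' t)) =
        M₂.mulVec (γ' t) := by
      funext i
      simp [Matrix.mulVec, dotProduct, hLdef, appendZeroCLM, Fin.sum_univ_add,
        Fin.append_left, Fin.append_right]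
    rw [heq] at hd
    exact hd
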